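/- Assume that for all natural numbers e and k with k < 2^e, either f(2^e+k) = f(k) or ν( f(2^e+k) − f(k) ) ≥ e − 2·α(k) − 2. Let x be a 2-adic integer such that the sequence j ↦ j − 2·α(x_j) (as integers) tends to +∞ as j → ∞. Then the sequence j ↦ f(x_j), viewed in ℚ₂, is a Cauchy sequence. -/

import Mathlib

/-- Proposition 1.3: assuming Conjecture 1.2, if j − 2·α(x_j) → ∞ then ⟨f(x_j)⟩ is
Cauchy in ℚ₂. Here α(n) = number of 1's in binary, x_j = PadicInt.appr x j. -/
theorem stmt_4
    (f : ℕ → ℚ) (hf : ∀ n : ℕ, f n = ∑ i ∈ Finset.range (n + 1), ((n.choose i : ℚ))⁻¹)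
    (α : ℕ → ℕ) (hα : ∀ n : ℕ, α n = (Nat.digits 2 n).count 1)
    (hconj : ∀ e k : ℕ, k < 2 ^ e →
      f (2 ^ e + k) = f k ∨
        padicValRat 2 (f (2 ^ e + k) - f k) ≥ (e : ℤ) - 2 * (α k : ℤ) - 2)
    (x : ℤ_[2])
    (hx : Filter.Tendsto (fun j : ℕ => (j : ℤ) - 2 * (α (x.appr j) : ℤ))
      Filter.atTop Filter.atTop) :
    CauchySeq (fun j : ℕ => ((f (x.appr j) : ℚ) : ℚ_[2])) := by
  set a : ℕ → ℚ_[2] := fun j => ((f (x.appr j) : ℚ) : ℚ_[2]) with ha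
  -- successive approximations differ by 0 or 2^j
  have happr : ∀ j : ℕ, x.appr (j + 1) = x.appr j ∨ x.appr (j + 1) = 2 ^ j + x.appr j := by
    intro j
    have hk : x.appr j < 2 ^ j := x.appr_lt j
    have hK : x.appr (j + 1) < 2 ^ (j + 1) := x.appr_lt (j + 1)
    have hmono : x.appr j ≤ x.appr (j + 1) := x.appr_mono (Nat.le_succ j)
    obtain ⟨c, hc⟩ := x.dvd_appr_sub_appr j (j + 1) (Nat.le_succ j)
    have hc2 : c < 2 := by
      by_contra h
      push_neg at h
      have : 2 ^ (j + 1) ≤ x.appr (j + 1) - x.appr j := by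
        rw [hc, pow_succ]
        exact Nat.mul_le_mul_left _ h
      omega
    interval_cases c
    · left; omega
    · right; omega
  -- bound on successive differences
  have hstep : ∀ j : ℕ, ∀ M : ℤ, M ≤ (j : ℤ) - 2 * (α (x.appr j) : ℤ) - 2 →
      ‖a (j + 1) - a j‖ ≤ (2 : ℝ) ^ (-M) := by
    intro j M hM
    have hpos : (0 : ℝ) < (2 : ℝ) ^ (-M) := by positivity
    rcases happr j with h | h
    · have : a (j + 1) - a j = 0 := by simp [ha, h]
      rw [this, norm_zero]; exact hpos.le
    · have hdiff : a (j + 1) - a j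
          = ((f (2 ^ j + x.appr j) - f (x.appr j) : ℚ) : ℚ_[2]) := by
        simp [ha, h]
      by_cases hne : f (2 ^ j + x.appr j) - f (x.appr j) = 0
      · rw [hdiff, hne]; simpa using hpos.le
      rcases hconj j (x.appr j) (x.appr_lt j) with heq | hval
      · exact absurd (by rw [heq, sub_self]) hne
      rw [hdiff, Padic.eq_padicNorm, padicNorm.eq_zpow_of_nonzero hne]
      have hle : (-(padicValRat 2 (f (2 ^ j + x.appr j) - f (x.appr j)))) ≤ -M := by omega
      have : ((2 : ℚ) : ℝ) ^ (-(padicValRat 2 (f (2 ^ j + x.appr j) - f (x.appr j))))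
          ≤ ((2 : ℚ) : ℝ) ^ (-M) := zpow_le_zpow_right₀ (by norm_num) hle
      push_cast at this ⊢
      convert this using 2 <;> norm_num
  rw [Metric.cauchySeq_iff']
  intro ε hε
  -- find M with 2^(-M) < ε
  obtain ⟨m, hm⟩ := exists_pow_lt_of_lt_one hε (show (1:ℝ)/2 < 1 by norm_num)
  have h2m : (2 : ℝ) ^ (-(m : ℤ)) < ε := by
    have he : (2 : ℝ) ^ (-(m : ℤ)) = ((1:ℝ)/2) ^ m := by
      rw [zpow_neg, zpow_natCast, one_div, inv_pow]
    rw [he]; exact hm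
  obtain ⟨N, hN⟩ := Filter.eventually_atTop.mp (hx.eventually_ge_atTop ((m : ℤ) + 2))
  refine ⟨N, ?_⟩
  intro n hn
  -- by induction, dist (a n) (a N) < ε using ultrametric inequality
  have key : ∀ n, N ≤ n → dist (a n) (a N) < ε := by
    intro n hn
    induction n with
    | zero =>
      have : N = 0 := Nat.le_zero.mp hn
      simp [this, hε]
    | succ k ih =>
      rcases Nat.lt_or_ge N (k + 1) with hlt | hge
      · have hNk : N ≤ k := Nat.lt_succ_iff.mp hlt
        have h1 : dist (a (k + 1)) (a k) < ε := by
          have := hstep k (m : ℤ) (by have := hN k hNk; omega)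
          calc dist (a (k + 1)) (a k) = ‖a (k + 1) - a k‖ := dist_eq_norm _ _
            _ ≤ (2 : ℝ) ^ (-(m : ℤ)) := this
            _ < ε := h2m
        have h2 : dist (a k) (a N) < ε := ih hNk
        calc dist (a (k + 1)) (a N)
            ≤ max (dist (a (k + 1)) (a k)) (dist (a k) (a N)) :=
              IsUltrametricDist.dist_triangle_max _ _ _
          _ < ε := max_lt h1 h2
      · have : N = k + 1 := le_antisymm hn hge
        simp [this, hε]
  exact key n hn
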